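/- arXiv:1702.02406 — 6 statements merged into one kernel-verified Lean document; each statement's English description precedes it below -/
import Mathlib

section
/- Let Σ be a type and let L be a language over Σ that is not regular. Then there is no least regular language containing L; that is, there is no regular language R with L ⊆ R such that R ⊆ R' for every regular language R' with L ⊆ R'. (Consequently, the poset of regular languages over Σ, ordered by inclusion, does not form a Galois connection with the complete lattice of all languages over Σ when the concretization is set inclusion.) -/
/-- Product DFA: intersection of regular languages is regular. -/
theorem aux_regular_inter {A : Type} {L₁ L₂ : Language A}
    (h₁ : L₁.IsRegular) (h₂ : L₂.IsRegular) : (L₁ ⊓ L₂).IsRegular := by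
  obtain ⟨σ₁, _, M₁, rfl⟩ := h₁
  obtain ⟨σ₂, _, M₂, rfl⟩ := h₂
  refine ⟨σ₁ × σ₂, inferInstance,
    ⟨fun p a => (M₁.step p.1 a, M₂.step p.2 a), (M₁.start, M₂.start),
      {p | p.1 ∈ M₁.accept ∧ p.2 ∈ M₂.accept}⟩, ?_⟩
  ext x
  have key : ∀ (x : List A) (s₁ : σ₁) (s₂ : σ₂),
      (DFA.mk (fun p a => (M₁.step p.1 a, M₂.step p.2 a)) (M₁.start, M₂.start)
        {p | p.1 ∈ M₁.accept ∧ p.2 ∈ M₂.accept}).evalFrom (s₁, s₂) x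
        = (M₁.evalFrom s₁ x, M₂.evalFrom s₂ x) := by
    intro x
    induction x with
    | nil => intro s₁ s₂; rfl
    | cons a x ih => intro s₁ s₂; simpa [DFA.evalFrom] using ih (M₁.step s₁ a) (M₂.step s₂ a)
  simp only [DFA.mem_accepts, DFA.eval, key]
  exact Iff.rfl

theorem aux_snoc_prefix {A : Type} {w x : List A} (a : A) (hx : x <+: w) :
    x ++ [a] <+: w ↔ ∃ h : x.length < w.length, w[x.length] = a := by
  have h2 : x = w.take x.length := List.prefix_iff_eq_take.mp hx
  constructor
  · intro hpre
    have hlen : x.length + 1 ≤ w.length := by have := hpre.length_le; simpa using this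
    refine ⟨by omega, ?_⟩
    have h1 : x ++ [a] = w.take (x.length + 1) := by
      simpa using List.prefix_iff_eq_take.mp hpre
    rw [← List.take_concat_get' w x.length (by omega), ← h2] at h1
    have := List.append_cancel_left h1
    simpa using this.symm
  · rintro ⟨h, hget⟩
    rw [List.prefix_iff_eq_take]
    simp only [List.length_append, List.length_singleton]
    rw [← List.take_concat_get' w x.length h, ← h2, hget]

/-- The language of words different from a fixed word `w` is regular. -/
theorem aux_regular_ne {A : Type} (w : List A) :
    Language.IsRegular {x : List A | x ≠ w} := by
  classical
  -- state `some i` : the input read so far is `w.take i`; `none` : input not a prefix of `w`.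
  let step : Option (Fin (w.length + 1)) → A → Option (Fin (w.length + 1)) := fun s a =>
    match s with
    | none => none
    | some i =>
      if h : ∃ hi : (i : ℕ) < w.length, w[(i : ℕ)] = a then
        some ⟨(i : ℕ) + 1, by obtain ⟨hi, -⟩ := h; omega⟩ else none
  let M : DFA A (Option (Fin (w.length + 1))) :=
    ⟨step, some ⟨0, by omega⟩, {s | s ≠ some (Fin.last w.length)}⟩
  refine ⟨Option (Fin (w.length + 1)), inferInstance, M, ?_⟩
  let f : List A → Option (Fin (w.length + 1)) := fun x =>
    if h : x <+: w then some ⟨x.length, by have := h.length_le; omega⟩ else none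
  have keystep : ∀ (x : List A) (a : A), step (f x) a = f (x ++ [a]) := by
    intro x a
    by_cases hx : x <+: w
    · by_cases h : ∃ hi : x.length < w.length, w[x.length] = a
      · have hpre : x ++ [a] <+: w := (aux_snoc_prefix a hx).mpr h
        simp [step, f, dif_pos hx, dif_pos hpre, h]
      · have hnpre : ¬ (x ++ [a] <+: w) := fun hp => h ((aux_snoc_prefix a hx).mp hp)
        simp [step, f, dif_pos hx, dif_neg hnpre, h]
    · have hnpre : ¬ (x ++ [a] <+: w) := fun hpre => hx ((List.prefix_append x [a]).trans hpre)
      simp [step, f, dif_neg hx, dif_neg hnpre]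
  have keyeval : ∀ x : List A, M.eval x = f x := by
    intro x
    induction x using List.reverseRecOn with
    | nil => simp [M, f, DFA.eval]
    | append_singleton x a ih =>
      rw [DFA.eval_append_singleton, ih]
      exact keystep x a
  ext x
  rw [DFA.mem_accepts, keyeval]
  simp only [Set.mem_setOf_eq, M, f]
  constructor
  · intro h hxw
    subst hxw
    exact h (by simp [dif_pos (List.prefix_refl x), Fin.last])
  · intro hxw heq
    by_cases hx : x <+: w
    · rw [dif_pos hx] at heq
      have hlen : x.length = w.length := by
        have := congrArg (fun o => o.map Fin.val) heq
        simpa [Fin.last] using this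
      exact hxw ((List.prefix_iff_eq_take.mp hx).trans (by simp [hlen]))
    · rw [dif_neg hx] at heq; exact Option.some_ne_none _ heq.symm

/-- If `L` is a non-regular language over an alphabet `A`, then there is
no least regular language containing `L`: no regular `R ⊇ L` is below every regular
language containing `L`. -/
theorem no_least_regular_superlanguage {A : Type} (L : Language A)
    (hL : ¬ L.IsRegular) :
    ¬ ∃ R : Language A, R.IsRegular ∧ L ≤ R ∧
        ∀ R' : Language A, R'.IsRegular → L ≤ R' → R ≤ R' := by
  rintro ⟨R, hR, hLR, hmin⟩
  have hne : L ≠ R := fun h => hL (h ▸ hR)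
  obtain ⟨w, hwR, hwL⟩ : ∃ w, w ∈ R ∧ w ∉ L := by
    by_contra h
    push_neg at h
    exact hne (le_antisymm hLR h)
  have hR' : (R ⊓ {x : List A | x ≠ w}).IsRegular := aux_regular_inter hR (aux_regular_ne w)
  have hLR' : L ≤ R ⊓ {x : List A | x ≠ w} := by
    intro x hx
    exact ⟨hLR hx, fun h => hwL (h ▸ hx)⟩
  have := hmin _ hR' hLR' hwR
  exact this.2 rfl
end

section
/- There do not exist a map α from the complete lattice of all languages over the two-letter alphabet Fin 2 (ordered by inclusion) to the poset of regular languages over Fin 2 (ordered by inclusion) such that α together with the inclusion map γ (sending a regular language to itself, viewed as a language) forms a Galois connection, i.e., such that α(L) ⊆ R ↔ L ⊆ γ(R) for all languages L and regular languages R. -/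
variable {α : Type*} [DecidableEq α]

/-- DFA recognizing exactly `{w}`. State `some i` = read `w.take i`; `none` = dead. -/
def singletonDFA (w : List α) : DFA α (Option (Fin (w.length + 1))) where
  step s a := s.bind fun i =>
    if h : w[i.val]? = some a then
      some ⟨i.val + 1, by have := (List.getElem?_eq_some_iff.mp h).1; omega⟩
    else none
  start := some ⟨0, Nat.succ_pos _⟩
  accept := {some (Fin.last w.length)}

lemma singletonDFA_eval (w x : List α) :
    (singletonDFA w).eval x =
      if h : x <+: w then some ⟨x.length, by have := h.length_le; omega⟩ else none := by
  induction x using List.reverseRecOn with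
  | nil => simp [singletonDFA, DFA.eval, DFA.evalFrom]
  | append_singleton x a ih =>
      rw [DFA.eval, DFA.evalFrom, List.foldl_append]
      change (singletonDFA w).step ((singletonDFA w).eval x) a = _
      rw [ih]
      by_cases hx : x <+: w
      · simp only [hx, dif_pos]
        by_cases hxa : x ++ [a] <+: w
        · have hg : w[x.length]? = some a := by
            obtain ⟨t, ht⟩ := hxa
            rw [← ht, List.append_assoc,
              List.getElem?_append_right le_rfl]
            simp
          simp [singletonDFA, hg, hxa]
        · have hg : w[x.length]? ≠ some a := by
            intro hg
            apply hxa
            obtain ⟨t, ht⟩ := hx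
            rw [← ht, List.getElem?_append_right le_rfl] at hg
            simp only [Nat.sub_self] at hg
            obtain ⟨t', rfl⟩ : ∃ t', t = a :: t' := by
              cases t with
              | nil => simp at hg
              | cons b t' =>
                  simp only [List.getElem?_cons_zero, Option.some.injEq] at hg
                  exact ⟨t', by rw [hg]⟩
            exact ⟨t', by rw [← ht]; simp⟩
          simp [singletonDFA, hg, hxa]
      · have : ¬ (x ++ [a] <+: w) := fun h => hx ((List.prefix_append x [a]).trans h)
        simp [singletonDFA, hx, this]

lemma singletonDFA_accepts (w : List α) : (singletonDFA w).accepts = {w} := by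
  ext x
  rw [DFA.mem_accepts, singletonDFA_eval]
  constructor
  · intro h
    by_cases hx : x <+: w
    · simp only [hx, dif_pos] at h
      have : x.length = w.length := by
        have := congrArg (fun s => s.map Fin.val) h
        simpa [singletonDFA, Fin.last] using this
      exact hx.eq_of_length this
    · simp [singletonDFA, hx] at h
  · rintro rfl
    simp [singletonDFA, Fin.last]

lemma compl_singleton_isRegular (w : List (Fin 2)) :
    Language.IsRegular (({w} : Language (Fin 2))ᶜ) := by
  refine ⟨Option (Fin (w.length + 1)), inferInstance,
    ⟨(singletonDFA w).step, (singletonDFA w).start, (singletonDFA w).acceptᶜ⟩, ?_⟩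
  ext x
  have h := congrArg (x ∈ ·) (singletonDFA_accepts w)
  simp only [eq_iff_iff] at h
  show _ ↔ ¬ x ∈ ({w} : Language (Fin 2))
  rw [← h, DFA.mem_accepts, DFA.mem_accepts, Set.mem_compl_iff]
  exact Iff.rfl

/-- The classic non-regular language `{0^n 1^n}`. -/
def Lnn : Language (Fin 2) := {x | ∃ n, x = List.replicate n 0 ++ List.replicate n 1}

lemma Lnn_not_regular : ¬ Lnn.IsRegular := by
  rintro ⟨σ, fin, M, hM⟩
  set p := Fintype.card σ with hp
  have hx : List.replicate p (0 : Fin 2) ++ List.replicate p 1 ∈ M.accepts := by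
    rw [hM]; exact ⟨p, rfl⟩
  have hlen : p ≤ (List.replicate p (0 : Fin 2) ++ List.replicate p 1).length := by
    simp
  obtain ⟨a, b, c, hsplit, hablen, hbne, hpump⟩ := M.pumping_lemma hx hlen
  -- a and b consist of zeros
  have hab0 : ∀ y ∈ a ++ b, y = (0 : Fin 2) := by
    have hlen2 : (a ++ b).length ≤ p := by simpa using hablen
    have hab : a ++ b = List.replicate (min (a ++ b).length p) (0 : Fin 2) := by
      have h3 := congrArg (List.take (a ++ b).length) hsplit
      rw [List.take_left,
        List.take_append_of_le_length (by simpa using hlen2), List.take_replicate] at h3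
      exact h3.symm
    intro y hy
    rw [hab] at hy
    exact List.eq_of_mem_replicate hy
  -- pump zero times: a ++ c ∈ accepts
  have hac : a ++ c ∈ M.accepts := by
    apply hpump
    refine Language.mem_mul.mpr ⟨a, ?_, c, rfl, rfl⟩
    exact Language.mem_mul.mpr ⟨a, rfl, [], Language.nil_mem_kstar _, by simp⟩
  rw [hM] at hac
  obtain ⟨n, hn⟩ := hac
  -- count letters
  have hcount1 := congrArg (List.count (1 : Fin 2)) hn
  have hcount0 := congrArg (List.count (0 : Fin 2)) hn
  have habc1 := congrArg (List.count (1 : Fin 2)) hsplit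
  have habc0 := congrArg (List.count (0 : Fin 2)) hsplit
  have hb0 : b.count (0 : Fin 2) = b.length := by
    apply List.count_eq_length.mpr
    intro y hy; exact (hab0 y (List.mem_append_right a hy)).symm
  have hb1 : b.count (1 : Fin 2) = 0 := by
    apply List.count_eq_zero.mpr
    intro hy
    exact absurd (hab0 1 (List.mem_append_right a hy)) (by decide)
  simp only [List.count_append, List.count_replicate,
    (by decide : ((1 : Fin 2) == 0) = false), (by decide : ((0 : Fin 2) == 1) = false),
    (by decide : ((0 : Fin 2) == 0) = true), (by decide : ((1 : Fin 2) == 1) = true),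
    if_true, if_false] at hcount1 hcount0 habc1 habc0
  have hbpos : 0 < b.length := List.length_pos_iff.mpr hbne
  omega

/-- There is no abstraction map `a` from the complete lattice of all
languages over `Fin 2` to the poset of regular languages over `Fin 2` forming a
Galois connection with the inclusion map `γ = Subtype.val`. -/
theorem no_galois_connection_to_regular_languages :
    ¬ ∃ a : Language (Fin 2) → {R : Language (Fin 2) // R.IsRegular},
        GaloisConnection a (Subtype.val : {R : Language (Fin 2) // R.IsRegular} → Language (Fin 2)) := by
  rintro ⟨a, gc⟩
  have hle : Lnn ≤ (a Lnn).val := gc.le_u_l Lnn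
  have hge : (a Lnn).val ≤ Lnn := by
    intro w hw
    by_contra hwL
    have hsub : Lnn ≤ (({w} : Language (Fin 2))ᶜ) := by
      intro y hy hyw
      exact hwL (by rwa [Set.mem_singleton_iff.mp hyw] at hy)
    have := (gc Lnn ⟨({w} : Language (Fin 2))ᶜ, compl_singleton_isRegular w⟩).mpr hsub
    exact this hw rfl
  have heq : (a Lnn).val = Lnn := le_antisymm hge hle
  exact Lnn_not_regular (heq ▸ (a Lnn).2)
end

section
/- Let Σ and Γ be alphabets and let M be an NFA over the product alphabet Σ × Γ (a letter-to-letter transducer, where a word w over Σ × Γ encodes input w.map fst and output w.map snd). For every regular language L over Σ, the output language { v : List Γ : ∃ w accepted by M with w.map fst ∈ L and w.map snd = v } is a regular language over Γ. -/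
private lemma nfa_evalFrom_split {α σ : Type*} (M : NFA α σ) :
    ∀ (w : List α) (S : Set σ) (s' : σ),
      s' ∈ M.evalFrom S w ↔ ∃ s ∈ S, s' ∈ M.evalFrom {s} w := by
  intro w
  induction w with
  | nil => intro S s'; simp
  | cons x w ih =>
    intro S s'
    have h1 : M.evalFrom S (x :: w) = M.evalFrom (M.stepSet S x) w := rfl
    rw [h1, ih]
    constructor
    · rintro ⟨s1, hs1, h⟩
      rw [NFA.mem_stepSet] at hs1
      obtain ⟨s, hs, hstep⟩ := hs1
      refine ⟨s, hs, ?_⟩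
      have h2 : M.evalFrom {s} (x :: w) = M.evalFrom (M.stepSet {s} x) w := rfl
      rw [h2, ih]
      exact ⟨s1, by simpa [NFA.mem_stepSet] using hstep, h⟩
    · rintro ⟨s, hs, h⟩
      have h2 : M.evalFrom {s} (x :: w) = M.evalFrom (M.stepSet {s} x) w := rfl
      rw [h2, ih] at h
      obtain ⟨s1, hs1, h⟩ := h
      rw [NFA.mem_stepSet] at hs1
      obtain ⟨t, ht, hstep⟩ := hs1
      rw [Set.mem_singleton_iff] at ht
      subst ht
      exact ⟨s1, NFA.mem_stepSet.2 ⟨t, hs, hstep⟩, h⟩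

/-- Let `M` be a finite-state letter-to-letter transducer from `A` to `B`
(an NFA over the product alphabet `A × B`). For every regular language `L` over `A`,
the output language of `M` on inputs from `L` is a regular language over `B`. -/
theorem transducer_output_regular {A B σ : Type*} [Fintype σ]
    (M : NFA (A × B) σ) (L : Language A) (hL : L.IsRegular) :
    Language.IsRegular
      {v : List B | ∃ w ∈ M.accepts, w.map Prod.fst ∈ L ∧ w.map Prod.snd = v} := by
  obtain ⟨τ, _, D, rfl⟩ := hL
  classical
  -- product NFA over B
  let N : NFA B (σ × τ) :=
    { step := fun p b => {q | ∃ a : A, q.1 ∈ M.step p.1 (a, b) ∧ q.2 = D.step p.2 a}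
      start := {p | p.1 ∈ M.start ∧ p.2 = D.start}
      accept := {p | p.1 ∈ M.accept ∧ p.2 ∈ D.accept} }
  have key : ∀ (v : List B) (P : Set (σ × τ)) (p : σ × τ),
      p ∈ N.evalFrom P v ↔ ∃ w : List (A × B), w.map Prod.snd = v ∧
        ∃ q ∈ P, p.1 ∈ M.evalFrom {q.1} w ∧ p.2 = D.evalFrom q.2 (w.map Prod.fst) := by
    intro v
    induction v with
    | nil =>
      intro P p
      simp only [NFA.evalFrom_nil]
      constructor
      · intro hp
        exact ⟨[], rfl, p, hp, by simp, by simp [DFA.evalFrom]⟩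
      · rintro ⟨w, hw, q, hq, h1, h2⟩
        have : w = [] := by simpa using hw
        subst this
        simp only [NFA.evalFrom_nil, Set.mem_singleton_iff] at h1
        simp only [List.map_nil] at h2
        have : p = q := Prod.ext h1 (by simpa [DFA.evalFrom] using h2)
        rwa [this]
    | cons b v ih =>
      intro P p
      have hEv : N.evalFrom P (b :: v) = N.evalFrom (N.stepSet P b) v := rfl
      rw [hEv, ih]
      constructor
      · rintro ⟨w, hw, q', hq', h1, h2⟩
        rw [NFA.mem_stepSet] at hq'
        obtain ⟨q, hq, a, hstep, hsnd⟩ := hq'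
        refine ⟨(a, b) :: w, by simp [hw], q, hq, ?_, ?_⟩
        · have e : M.evalFrom {q.1} ((a, b) :: w) = M.evalFrom (M.stepSet {q.1} (a, b)) w := rfl
          rw [e, nfa_evalFrom_split]
          exact ⟨q'.1, by simpa [NFA.mem_stepSet] using hstep, h1⟩
        · simp only [List.map_cons]
          rw [show D.evalFrom q.2 (a :: w.map Prod.fst) = D.evalFrom (D.step q.2 a) (w.map Prod.fst) from rfl]
          rw [← hsnd]; exact h2
      · rintro ⟨w, hw, q, hq, h1, h2⟩
        rcases w with _ | ⟨⟨a, b'⟩, w⟩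
        · simp at hw
        · simp only [List.map_cons, List.cons.injEq] at hw
          obtain ⟨hb, hw⟩ := hw
          subst hb
          have e : M.evalFrom {q.1} ((a, b') :: w) = M.evalFrom (M.stepSet {q.1} (a, b')) w := rfl
          rw [e, nfa_evalFrom_split] at h1
          obtain ⟨s1, hs1, h1⟩ := h1
          rw [NFA.mem_stepSet] at hs1
          obtain ⟨t, ht, hstep⟩ := hs1
          rw [Set.mem_singleton_iff] at ht
          subst ht
          refine ⟨w, hw, (s1, D.step q.2 a), ?_, h1, ?_⟩
          · rw [NFA.mem_stepSet]
            exact ⟨q, hq, a, hstep, rfl⟩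
          · simpa using h2
  have hacc : N.accepts =
      {v : List B | ∃ w ∈ M.accepts, w.map Prod.fst ∈ D.accepts ∧ w.map Prod.snd = v} := by
    ext v
    rw [NFA.mem_accepts]
    constructor
    · rintro ⟨p, hpacc, hpeval⟩
      rw [key] at hpeval
      obtain ⟨w, hw, q, ⟨hq1, hq2⟩, h1, h2⟩ := hpeval
      refine ⟨w, ?_, ?_, hw⟩
      · rw [NFA.mem_accepts]
        exact ⟨p.1, hpacc.1, (nfa_evalFrom_split M w M.start p.1).2 ⟨q.1, hq1, h1⟩⟩
      · rw [DFA.mem_accepts]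
        rw [hq2] at h2
        show D.evalFrom D.start _ ∈ D.accept
        rw [← h2]; exact hpacc.2
    · rintro ⟨w, hwM, hwD, hw⟩
      rw [NFA.mem_accepts] at hwM
      obtain ⟨s, hsacc, hseval⟩ := hwM
      rw [nfa_evalFrom_split] at hseval
      obtain ⟨s0, hs0, hseval⟩ := hseval
      refine ⟨(s, D.evalFrom D.start (w.map Prod.fst)), ⟨hsacc, hwD⟩, ?_⟩
      rw [key]
      exact ⟨w, hw, (s0, D.start), ⟨hs0, rfl⟩, hseval, rfl⟩
  have : Fintype (Set (σ × τ)) := Fintype.ofFinite _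
  let e : Set (σ × τ) ≃ Fin (Fintype.card (Set (σ × τ))) := Fintype.equivFin _
  exact ⟨Fin (Fintype.card (Set (σ × τ))), inferInstance, DFA.reindex e N.toDFA,
    by rw [DFA.accepts_reindex, NFA.toDFA_correct, hacc]⟩
end

section
/- Let Σ, Γ, Δ be alphabets, let M₁ be an NFA over Σ × Γ with state type σ₁ and M₂ an NFA over Γ × Δ with state type σ₂ (letter-to-letter transducers). Then there exists an NFA M over Σ × Δ with state type σ₁ × σ₂ such that for every word w over Σ × Δ: w is accepted by M if and only if there exists a word u over Γ with length u = length w such that the word zip (w.map fst) u is accepted by M₁ and the word zip u (w.map snd) is accepted by M₂. (Composition of letter-to-letter transductions is realized by a letter-to-letter transducer.) -/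
open Set

private def compNFA {A B C σ₁ σ₂ : Type*} (M₁ : NFA (A × B) σ₁) (M₂ : NFA (B × C) σ₂) :
    NFA (A × C) (σ₁ × σ₂) where
  step := fun p x q => ∃ b, q.1 ∈ M₁.step p.1 (x.1, b) ∧ q.2 ∈ M₂.step p.2 (b, x.2)
  start := M₁.start ×ˢ M₂.start
  accept := M₁.accept ×ˢ M₂.accept

private lemma stepSet_iUnion {α σ ι : Type*} (M : NFA α σ) (S : ι → Set σ) (a : α) :
    M.stepSet (⋃ i, S i) a = ⋃ i, M.stepSet (S i) a := by
  ext s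
  simp only [NFA.mem_stepSet, Set.mem_iUnion]
  aesop

private lemma evalFrom_iUnion {α σ ι : Type*} (M : NFA α σ) (S : ι → Set σ) (w : List α) :
    M.evalFrom (⋃ i, S i) w = ⋃ i, M.evalFrom (S i) w := by
  induction w generalizing S with
  | nil => simp [NFA.evalFrom]
  | cons a w ih =>
      show M.evalFrom (M.stepSet (⋃ i, S i) a) w = _
      rw [stepSet_iUnion, ih]
      rfl

private lemma stepSet_prod {A B C σ₁ σ₂ : Type*} (M₁ : NFA (A × B) σ₁) (M₂ : NFA (B × C) σ₂)
    (S₁ : Set σ₁) (S₂ : Set σ₂) (x : A × C) :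
    (compNFA M₁ M₂).stepSet (S₁ ×ˢ S₂) x
      = ⋃ b, (M₁.stepSet S₁ (x.1, b)) ×ˢ (M₂.stepSet S₂ (b, x.2)) := by
  ext q
  simp only [NFA.mem_stepSet, Set.mem_iUnion, Set.mem_prod, compNFA]
  constructor
  · rintro ⟨t, ⟨ht1, ht2⟩, b, hb1, hb2⟩
    exact ⟨b, ⟨t.1, ht1, hb1⟩, ⟨t.2, ht2, hb2⟩⟩
  · rintro ⟨b, ⟨t₁, ht₁, h1⟩, ⟨t₂, ht₂, h2⟩⟩
    exact ⟨(t₁, t₂), ⟨ht₁, ht₂⟩, b, h1, h2⟩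

private lemma key {A B C σ₁ σ₂ : Type*} (M₁ : NFA (A × B) σ₁) (M₂ : NFA (B × C) σ₂)
    (w : List (A × C)) (S₁ : Set σ₁) (S₂ : Set σ₂) (p : σ₁ × σ₂) :
    p ∈ (compNFA M₁ M₂).evalFrom (S₁ ×ˢ S₂) w ↔
      ∃ u : List B, u.length = w.length ∧
        p.1 ∈ M₁.evalFrom S₁ (List.zip (w.map Prod.fst) u) ∧
        p.2 ∈ M₂.evalFrom S₂ (List.zip u (w.map Prod.snd)) := by
  induction w generalizing S₁ S₂ with
  | nil =>
      simp only [NFA.evalFrom_nil, List.map_nil, List.length_nil, List.length_eq_zero_iff]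
      constructor
      · intro h; exact ⟨[], rfl, by simpa using h.1, by simpa using h.2⟩
      · rintro ⟨u, rfl, h1, h2⟩; simp_all [Set.mem_prod]
  | cons x w ih =>
      show p ∈ (compNFA M₁ M₂).evalFrom ((compNFA M₁ M₂).stepSet (S₁ ×ˢ S₂) x) w ↔ _
      rw [stepSet_prod, evalFrom_iUnion]
      simp only [Set.mem_iUnion]
      constructor
      · rintro ⟨b, hb⟩
        obtain ⟨u, hu, h1, h2⟩ := (ih _ _).mp hb
        exact ⟨b :: u, by simp [hu], h1, h2⟩
      · rintro ⟨u, hu, h1, h2⟩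
        cases u with
        | nil => simp at hu
        | cons b u =>
            refine ⟨b, (ih _ _).mpr ⟨u, by simpa using hu, ?_, ?_⟩⟩
            · simpa using h1
            · simpa using h2

/-- The composition of two letter-to-letter transducers
`M₁ : A ⇒ B` and `M₂ : B ⇒ C` is realized by a letter-to-letter transducer over
`A × C` with state type `σ₁ × σ₂`: it accepts `w` iff there is an intermediate word
`u` over `B` of the same length such that `M₁` accepts `zip (input of w) u` and
`M₂` accepts `zip u (output of w)`. -/
theorem transducer_composition {A B C σ₁ σ₂ : Type*}
    (M₁ : NFA (A × B) σ₁) (M₂ : NFA (B × C) σ₂) :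
    ∃ M : NFA (A × C) (σ₁ × σ₂),
      ∀ w : List (A × C),
        w ∈ M.accepts ↔
          ∃ u : List B, u.length = w.length ∧
            List.zip (w.map Prod.fst) u ∈ M₁.accepts ∧
            List.zip u (w.map Prod.snd) ∈ M₂.accepts := by
  refine ⟨compNFA M₁ M₂, fun w => ?_⟩
  rw [NFA.mem_accepts]
  constructor
  · rintro ⟨p, hp, hev⟩
    obtain ⟨u, hu, h1, h2⟩ := (key M₁ M₂ w _ _ p).mp hev
    exact ⟨u, hu, M₁.mem_accepts.mpr ⟨p.1, hp.1, h1⟩, M₂.mem_accepts.mpr ⟨p.2, hp.2, h2⟩⟩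
  · rintro ⟨u, hu, h1, h2⟩
    obtain ⟨p₁, hp₁, he₁⟩ := M₁.mem_accepts.mp h1
    obtain ⟨p₂, hp₂, he₂⟩ := M₂.mem_accepts.mp h2
    exact ⟨(p₁, p₂), ⟨hp₁, hp₂⟩, (key M₁ M₂ w _ _ _).mpr ⟨u, hu, he₁, he₂⟩⟩
end

section
/- Let Σ be an alphabet, let L be a regular language over Σ, and fix natural numbers n and m. Then the substring image language { (w.drop n).take m : w ∈ L, n + m ≤ length w } — the set of words consisting of the m consecutive symbols of some w ∈ L starting from position n, defined only when n + m ≤ length w — is a regular language over Σ. -/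
/-- For a regular language `L` over `A` and fixed `n m : ℕ`, the
language of substrings `substr(w, n, m) = (w.drop n).take m` of words `w ∈ L` with
`n + m ≤ length w` is regular. -/
theorem regular_substring_image {A : Type*} (L : Language A) (hL : L.IsRegular)
    (n m : ℕ) :
    Language.IsRegular
      {u : List A | ∃ w ∈ L, n + m ≤ w.length ∧ (w.drop n).take m = u} := by
  classical
  obtain ⟨σ, hσ, M, hM⟩ := hL
  set Co : σ → Prop := fun t => ∃ y, M.evalFrom t y ∈ M.accept with hCo
  set S0 : Set σ := {s | ∃ x : List A, x.length = n ∧ M.eval x = s} with hS0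
  let N : DFA A (Set σ × Fin (m + 2)) :=
    { step := fun p a => ((fun s => M.step s a) '' p.1,
        ⟨min (p.2.val + 1) (m + 1), by omega⟩)
      start := (S0, ⟨0, by omega⟩)
      accept := {p | p.2.val = m ∧ ∃ t ∈ p.1, Co t} }
  refine ⟨Set σ × Fin (m + 2), inferInstance, N, ?_⟩
  have key : ∀ (u : List A) (T : Set σ) (k : Fin (m + 2)),
      N.evalFrom (T, k) u =
        ((fun s => M.evalFrom s u) '' T, ⟨min (k.val + u.length) (m + 1), by omega⟩) := by
    intro u
    induction u with
    | nil =>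
      intro T k
      refine Prod.ext ?_ ?_
      · simp [DFA.evalFrom]
      · have : k.val ≤ m + 1 := by omega
        simp [DFA.evalFrom]
        exact Fin.ext (by simp; omega)
    | cons a u ih =>
      intro T k
      have h1 : N.evalFrom (T, k) (a :: u) = N.evalFrom (N.step (T, k) a) u := rfl
      rw [h1]
      show N.evalFrom ((fun s => M.step s a) '' T, ⟨min (k.val + 1) (m + 1), by omega⟩) u = _
      rw [ih]
      refine Prod.ext ?_ ?_
      · simp only [Set.image_image]
        rfl
      · exact Fin.ext (by simp; omega)
  ext u
  rw [DFA.mem_accepts]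
  have heval : N.eval u = N.evalFrom (S0, ⟨0, by omega⟩) u := rfl
  rw [heval, key]
  constructor
  · rintro ⟨hlen, t, ⟨s, hs, rfl⟩, y, hy⟩
    have hul : u.length = m := by
      simp at hlen; omega
    obtain ⟨x, hxlen, hxev⟩ := hs
    refine ⟨x ++ u ++ y, ?_, ?_, ?_⟩
    · rw [← hM, DFA.mem_accepts]
      show M.evalFrom M.start (x ++ u ++ y) ∈ M.accept
      rw [DFA.evalFrom_of_append, DFA.evalFrom_of_append,
        show M.evalFrom M.start x = s from hxev]
      exact hy
    · simp [hxlen, hul]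
    · rw [List.append_assoc, List.drop_append_of_le_length (by omega),
        List.drop_of_length_le (by omega)]
      simp [List.take_append_of_le_length, hul]
  · rintro ⟨w, hw, hnm, rfl⟩
    have hul : ((w.drop n).take m).length = m := by
      simp; omega
    constructor
    · simp [hul]
    · refine ⟨M.evalFrom M.start ((w.take (n + m))),
        ⟨M.eval (w.take n), ⟨w.take n, by simp; omega, rfl⟩, ?_⟩, w.drop (n + m), ?_⟩
      · show M.evalFrom (M.evalFrom M.start (w.take n)) ((w.drop n).take m) = _
        rw [← DFA.evalFrom_of_append]
        congr 1
        rw [← List.take_add]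
      · show M.evalFrom (M.evalFrom M.start (w.take (n + m))) (w.drop (n + m)) ∈ M.accept
        rw [← DFA.evalFrom_of_append, List.take_append_drop]
        rw [← hM] at hw
        exact hw
end

section
/- Let α be a finite alphabet and let M be a deterministic finite automaton over α with a finite state type. Then there exists a regular expression r over α whose denoted language equals the language accepted by M. (Every finite automaton can be converted to an equivalent regular expression, e.g., by Brzozowski's algebraic method.) -/
open List
open scoped Computability

namespace BrzAux

variable {A σ : Type} (M : DFA A σ)

/-- All internal states of the run of `w` from `p` lie in `S`. -/
def ok (S : Set σ) (p : σ) (w : List A) : Prop :=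
  ∀ i, 0 < i → i < w.length → M.evalFrom p (w.take i) ∈ S

/-- Words driving `M` from `p` to `q` with internal states in `S`. -/
def path (S : Set σ) (p q : σ) : Language A :=
  {w | M.evalFrom p w = q ∧ ok M S p w}

lemma path_mono {S T : Set σ} (hST : S ⊆ T) (p q : σ) :
    ∀ {w : List A}, w ∈ path M S p q → w ∈ path M T p q := by
  rintro w ⟨h1, h2⟩
  exact ⟨h1, fun i hi hil => hST (h2 i hi hil)⟩

lemma path_append {S : Set σ} {p m q : σ} (hm : m ∈ S) {w₁ w₂ : List A}
    (h₁ : w₁ ∈ path M S p m) (h₂ : w₂ ∈ path M S m q) :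
    w₁ ++ w₂ ∈ path M S p q := by
  obtain ⟨e₁, o₁⟩ := h₁
  obtain ⟨e₂, o₂⟩ := h₂
  refine ⟨by rw [DFA.evalFrom_of_append, e₁, e₂], ?_⟩
  intro i hi hil
  rcases lt_trichotomy i w₁.length with h | h | h
  · rw [List.take_append_of_le_length h.le]
    exact o₁ i hi h
  · rw [List.take_append_of_le_length h.le, h, List.take_length, e₁]
    exact hm
  · rw [List.take_append, List.take_of_length_le (le_of_lt h),
      DFA.evalFrom_of_append, e₁]
    apply o₂ (i - w₁.length) (by omega)
    simp only [List.length_append] at hil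
    omega

lemma path_flatten {S : Set σ} {s : σ} (hs : s ∈ S) {L : List (List A)}
    (h : ∀ u ∈ L, u ∈ path M S s s) : L.flatten ∈ path M S s s := by
  induction L with
  | nil => exact ⟨rfl, fun i hi hil => absurd hil (by simp)⟩
  | cons u L ih =>
    rw [List.flatten_cons]
    exact path_append M hs (h u (by simp)) (ih fun v hv => h v (by simp [hv]))

/-- decomposition of a path through `insert s S` from `s` to `q`. -/
lemma path_loop {S : Set σ} {s q : σ} :
    ∀ (n : ℕ) (w : List A), w.length = n → w ∈ path M (insert s S) s q →
      w ∈ (path M S s s)∗ * path M S s q := by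
  intro n
  induction n using Nat.strong_induction_on with
  | _ n ih =>
  rintro w rfl ⟨he, ho⟩
  by_cases hall : ∀ i, 0 < i → i < w.length → M.evalFrom s (w.take i) ≠ s
  · have hw : w ∈ path M S s q :=
      ⟨he, fun i hi hil => (ho i hi hil).resolve_left (hall i hi hil)⟩
    have := Language.append_mem_mul (Language.nil_mem_kstar (path M S s s)) hw
    simpa using this
  · push_neg at hall
    obtain ⟨i, hi0, hil, hieq⟩ := hall
    -- minimal such i
    have hP : ∃ i, 0 < i ∧ i < w.length ∧ M.evalFrom s (w.take i) = s := ⟨i, hi0, hil, hieq⟩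
    classical
    set j := Nat.find hP with hj
    obtain ⟨hj0, hjl, hjeq⟩ := Nat.find_spec hP
    have hmin : ∀ k, 0 < k → k < j → M.evalFrom s (w.take k) ≠ s := by
      intro k hk0 hkj hkeq
      exact Nat.find_min hP hkj ⟨hk0, by omega, hkeq⟩
    have hsplit : w = w.take j ++ w.drop j := (List.take_append_drop j w).symm
    have h₁ : w.take j ∈ path M S s s := by
      refine ⟨hjeq, ?_⟩
      intro k hk0 hkl
      rw [List.length_take] at hkl
      have hkj : k < j := lt_of_lt_of_le hkl (min_le_left _ _)
      rw [List.take_take, min_eq_left hkj.le]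
      exact ((ho k hk0 (by omega)).resolve_left (hmin k hk0 hkj))
    have h₂ : w.drop j ∈ path M (insert s S) s q := by
      constructor
      · have h := he
        rw [hsplit, DFA.evalFrom_of_append, h₁.1] at h
        · exact h
      · intro k hk0 hkl
        have : M.evalFrom s ((w.take j) ++ (w.drop j).take k) ∈ insert s S := by
          rw [← List.take_add]
          apply ho (j + k) (by omega)
          rw [List.length_drop] at hkl; omega
        rwa [DFA.evalFrom_of_append, h₁.1] at this
    have hlen : (w.drop j).length < w.length := by
      rw [List.length_drop]; omega
    obtain ⟨a, ha, b, hb, hab⟩ := Language.mem_mul.mp (ih _ hlen _ rfl h₂)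
    rw [hsplit, ← hab, ← List.append_assoc]
    refine Language.append_mem_mul ?_ hb
    obtain ⟨L, hL, hLmem⟩ := Language.mem_kstar.mp ha
    rw [hL, ← List.flatten_cons]
    refine Language.join_mem_kstar ?_
    intro y hy
    rcases List.mem_cons.mp hy with rfl | hy
    · exact h₁
    · exact hLmem y hy

lemma path_insert {S : Set σ} (s p q : σ) :
    path M (insert s S) p q =
      path M S p q + path M S p s * ((path M S s s)∗ * path M S s q) := by
  ext w
  constructor
  · rintro ⟨he, ho⟩
    by_cases hall : ∀ i, 0 < i → i < w.length → M.evalFrom p (w.take i) ≠ s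
    · exact Or.inl ⟨he, fun i hi hil => (ho i hi hil).resolve_left (hall i hi hil)⟩
    · right
      push_neg at hall
      have hP : ∃ i, 0 < i ∧ i < w.length ∧ M.evalFrom p (w.take i) = s := by
        obtain ⟨i, h1, h2, h3⟩ := hall; exact ⟨i, h1, h2, h3⟩
      classical
      set j := Nat.find hP with hj
      obtain ⟨hj0, hjl, hjeq⟩ := Nat.find_spec hP
      have hmin : ∀ k, 0 < k → k < j → M.evalFrom p (w.take k) ≠ s := by
        intro k hk0 hkj hkeq
        exact Nat.find_min hP hkj ⟨hk0, by omega, hkeq⟩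
      have h₁ : w.take j ∈ path M S p s := by
        refine ⟨hjeq, ?_⟩
        intro k hk0 hkl
        rw [List.length_take] at hkl
        have hkj : k < j := lt_of_lt_of_le hkl (min_le_left _ _)
        rw [List.take_take, min_eq_left hkj.le]
        exact ((ho k hk0 (by omega)).resolve_left (hmin k hk0 hkj))
      have h₂ : w.drop j ∈ path M (insert s S) s q := by
        constructor
        · have hsplit : w = w.take j ++ w.drop j := (List.take_append_drop j w).symm
          have h := he
          rw [hsplit, DFA.evalFrom_of_append, h₁.1] at h
          exact h
        · intro k hk0 hkl
          have : M.evalFrom p ((w.take j) ++ (w.drop j).take k) ∈ insert s S := by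
            rw [← List.take_add]
            apply ho (j + k) (by omega)
            rw [List.length_drop] at hkl; omega
          rwa [DFA.evalFrom_of_append, h₁.1] at this
      have := path_loop M _ _ rfl h₂
      have := Language.append_mem_mul h₁ this
      rwa [List.take_append_drop] at this
  · rintro (h | h)
    · exact path_mono M (Set.subset_insert s S) p q h
    · obtain ⟨a, ha, b, hb, hab⟩ := Language.mem_mul.mp h
      obtain ⟨c, hc, d, hd, hcd⟩ := Language.mem_mul.mp hb
      obtain ⟨L, hL, hLmem⟩ := Language.mem_kstar.mp hc
      have hcmem : c ∈ path M (insert s S) s s := by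
        rw [hL]
        exact path_flatten M (Set.mem_insert s S)
          (fun u hu => path_mono M (Set.subset_insert s S) s s (hLmem u hu))
      have hdmem : d ∈ path M (insert s S) s q :=
        path_mono M (Set.subset_insert s S) s q hd
      have hamem : a ∈ path M (insert s S) p s :=
        path_mono M (Set.subset_insert s S) p s ha
      rw [← hab, ← hcd]
      exact path_append M (Set.mem_insert s S) hamem
        (path_append M (Set.mem_insert s S) hcmem hdmem)

/-- Sum of a list of regular expressions. -/
def sumR : List (RegularExpression A) → RegularExpression A
  | [] => 0
  | r :: l => r + sumR l

lemma mem_sumR (l : List (RegularExpression A)) (w : List A) :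
    w ∈ (sumR l).matches' ↔ ∃ r ∈ l, w ∈ r.matches' := by
  induction l with
  | nil => simp [sumR, RegularExpression.matches'_zero]
  | cons r l ih =>
    simp only [sumR, RegularExpression.matches'_add, Language.mem_add, ih, List.mem_cons]
    constructor
    · rintro (h | ⟨r', hr', hw⟩)
      · exact ⟨r, Or.inl rfl, h⟩
      · exact ⟨r', Or.inr hr', hw⟩
    · rintro ⟨r', (rfl | hr'), hw⟩
      · exact Or.inl hw
      · exact Or.inr ⟨r', hr', hw⟩

lemma path_empty (p q : σ) (w : List A) :
    w ∈ path M ∅ p q ↔ (w = [] ∧ p = q) ∨ ∃ a, w = [a] ∧ M.step p a = q := by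
  constructor
  · rintro ⟨he, ho⟩
    match w with
    | [] => exact Or.inl ⟨rfl, he⟩
    | [a] => exact Or.inr ⟨a, rfl, he⟩
    | a :: b :: t =>
      exact absurd (ho 1 one_pos (by simp)) (by simp)
  · rintro (⟨rfl, rfl⟩ | ⟨a, rfl, ha⟩)
    · exact ⟨rfl, fun i hi hil => absurd hil (by simp)⟩
    · exact ⟨ha, fun i hi hil => by
        simp only [List.length_cons, List.length_nil] at hil; omega⟩

lemma exists_regex [Fintype A] [Fintype σ] (S : Finset σ) (p q : σ) :
    ∃ r : RegularExpression A, r.matches' = path M (↑S) p q := by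
  classical
  induction S using Finset.induction_on generalizing p q with
  | empty =>
    refine ⟨(if p = q then 1 else 0) +
      sumR (((Finset.univ.filter (fun a => M.step p a = q)).toList).map
        RegularExpression.char), ?_⟩
    ext w
    rw [Finset.coe_empty, path_empty]
    simp only [RegularExpression.matches'_add, Language.mem_add, mem_sumR, List.mem_map,
      Finset.mem_toList, Finset.mem_filter, Finset.mem_univ, true_and]
    constructor
    · rintro (h | ⟨r, ⟨a, ha, rfl⟩, hw⟩)
      · split_ifs at h with hpq
        · rw [RegularExpression.matches'_epsilon, Language.mem_one] at h
          exact Or.inl ⟨h, hpq⟩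
        · simp [RegularExpression.matches'_zero] at h
      · rw [RegularExpression.matches'_char] at hw
        exact Or.inr ⟨a, hw, ha⟩
    · rintro (⟨rfl, rfl⟩ | ⟨a, rfl, ha⟩)
      · left; simp [RegularExpression.matches'_epsilon, Language.mem_one]
      · right
        exact ⟨RegularExpression.char a, ⟨a, ha, rfl⟩,
          by rw [RegularExpression.matches'_char]; rfl⟩
  | @insert s S hs ih =>
    obtain ⟨rpq, hrpq⟩ := ih p q
    obtain ⟨rps, hrps⟩ := ih p s
    obtain ⟨rss, hrss⟩ := ih s s
    obtain ⟨rsq, hrsq⟩ := ih s q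
    refine ⟨rpq + rps * (rss.star * rsq), ?_⟩
    rw [Finset.coe_insert, path_insert]
    simp only [RegularExpression.matches'_add, RegularExpression.matches'_mul,
      RegularExpression.matches'_star, hrpq, hrps, hrss, hrsq]

end BrzAux

/-- Every DFA over a finite alphabet with finitely many states is
equivalent to some regular expression (Brzozowski's algebraic method). -/
theorem dfa_to_regularExpression {A σ : Type} [Fintype A] [Fintype σ]
    (M : DFA A σ) :
    ∃ r : RegularExpression A, r.matches' = M.accepts := by
  classical
  have h : ∀ q : σ, ∃ r : RegularExpression A,
      r.matches' = BrzAux.path M (↑(Finset.univ : Finset σ)) M.start q :=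
    fun q => BrzAux.exists_regex M Finset.univ M.start q
  choose r hr using h
  refine ⟨BrzAux.sumR (((Finset.univ.filter (fun q => q ∈ M.accept)).toList).map r), ?_⟩
  ext w
  rw [BrzAux.mem_sumR]
  simp only [List.mem_map, Finset.mem_toList, Finset.mem_filter, Finset.mem_univ, true_and]
  constructor
  · rintro ⟨r', ⟨q, hq, rfl⟩, hw⟩
    rw [hr q] at hw
    have : M.evalFrom M.start w = q := hw.1
    show M.evalFrom M.start w ∈ M.accept
    rw [this]; exact hq
  · intro hw
    refine ⟨r (M.evalFrom M.start w), ⟨M.evalFrom M.start w, hw, rfl⟩, ?_⟩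
    rw [hr]
    exact ⟨rfl, fun i hi hil => by simp⟩
end
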